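/- Let D > 0, τ ≥ 0, and let g : ℝ² → ℝ satisfy (H1) and (H2). Let d > 0 be such that u ↦ du + u·g(u,1) is nondecreasing on [0, 1], and let u : ℤ × [−τ, ∞) → ℝ be the mild solution of the delayed lattice equation with initial data φ satisfying 0 ≤ φ_n(s) ≤ 1 for all n ∈ ℤ, s ∈ [−τ, 0]. Then 0 ≤ u_n(t) ≤ 1 for all n ∈ ℤ and t > 0. -/

import Mathlib

open Real Filter Set MeasureTheory

/-- (H1): `g(1,0) = 0` and `g(u,0) > 0` for `u ∈ (0,1)`. -/
def HypH1 (g : ℝ → ℝ → ℝ) : Prop :=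
  g 1 0 = 0 ∧ ∀ u ∈ Set.Ioo (0:ℝ) 1, 0 < g u 0

/-- (H2): `g` is Lipschitz continuous and strictly decreasing in each argument on
`[0,1]×[0,1]`, and `g(u,0) → −∞` as `u → ∞`. -/
def HypH2 (g : ℝ → ℝ → ℝ) : Prop :=
  (∃ L : NNReal, LipschitzWith L (fun p : ℝ × ℝ => g p.1 p.2)) ∧
  (∀ v ∈ Set.Icc (0:ℝ) 1, StrictAntiOn (fun u => g u v) (Set.Icc 0 1)) ∧
  (∀ u ∈ Set.Icc (0:ℝ) 1, StrictAntiOn (fun v => g u v) (Set.Icc 0 1)) ∧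
  Filter.Tendsto (fun u => g u 0) Filter.atTop Filter.atBot

/-- (H3): `g(0,1) > 0` and there is `E ∈ (0,1)` with `g(E,E) = 0`. -/
def HypH3 (g : ℝ → ℝ → ℝ) : Prop :=
  0 < g 0 1 ∧ ∃ E ∈ Set.Ioo (0:ℝ) 1, g E E = 0

/-- (H4): if `1 > ū ≥ u̲ > 0` with `g(u̲,ū) ≤ 0` and `g(ū,u̲) ≥ 0`, then `u̲ = ū = E`. -/
def HypH4 (g : ℝ → ℝ → ℝ) (E : ℝ) : Prop :=
  ∀ ubar lbar : ℝ, ubar < 1 → lbar ≤ ubar → 0 < lbar →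
    g lbar ubar ≤ 0 → 0 ≤ g ubar lbar → lbar = E ∧ ubar = E

/-- A bounded mild solution of the delayed lattice differential equation
`du_n/dt = D(u_{n+1} − 2u_n + u_{n−1}) + u_n g(u_n(t), u_n(t−τ))` with initial data `φ`
on `[−τ,0]`, written via the variation-of-constants formula with auxiliary constant `d`. -/
def MildSolution (D τ d : ℝ) (g : ℝ → ℝ → ℝ) (φ u : ℤ → ℝ → ℝ) : Prop :=
  (∃ C : ℝ, ∀ (n : ℤ) (t : ℝ), -τ ≤ t → |u n t| ≤ C) ∧
  (∀ n : ℤ, ContinuousOn (u n) (Set.Ici (-τ))) ∧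
  (∀ (n : ℤ) (s : ℝ), s ∈ Set.Icc (-τ) 0 → u n s = φ n s) ∧
  (∀ (n : ℤ) (t : ℝ), 0 < t →
    u n t = Real.exp (-(2*D+d)*t) * φ n 0 +
      ∫ s in (0:ℝ)..t, Real.exp (-(2*D+d)*(t-s)) *
        (d * u n s + D * (u (n+1) s + u (n-1) s) + u n s * g (u n s) (u n (s - τ))))


/-- projection onto `[0,1]` -/
noncomputable def pj (x : ℝ) : ℝ := max 0 (min x 1)
/-- distance to `[0,1]` (as a max expression) -/
noncomputable def Pd (x : ℝ) : ℝ := max (max (x-1) (-x)) 0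

lemma Pd_nonneg (x : ℝ) : 0 ≤ Pd x := le_max_right _ _

lemma Pd_le_of {x y : ℝ} (h1 : x - 1 ≤ y) (h2 : -x ≤ y) (h3 : 0 ≤ y) : Pd x ≤ y :=
  max_le (max_le h1 h2) h3

lemma pj_mem (x : ℝ) : pj x ∈ Set.Icc (0:ℝ) 1 :=
  ⟨le_max_left _ _, max_le (by norm_num) (min_le_right _ _)⟩

lemma abs_pj_le_one (x : ℝ) : |pj x| ≤ 1 := by
  have h := pj_mem x
  rw [abs_le]; constructor <;> [linarith [h.1]; exact h.2]

lemma abs_sub_pj_le (x : ℝ) : |x - pj x| ≤ Pd x := by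
  rcases le_total x 0 with h | h
  · have : pj x = 0 := by
      unfold pj
      rw [min_eq_left (by linarith), max_eq_left h]
    rw [this, sub_zero, abs_of_nonpos h]
    exact le_trans (le_max_right _ _) (le_max_left _ _)
  · rcases le_total x 1 with h1 | h1
    · have : pj x = x := by
        unfold pj
        rw [min_eq_left h1, max_eq_right h]
      rw [this, sub_self, abs_zero]
      exact Pd_nonneg x
    · have : pj x = 1 := by
        unfold pj
        rw [min_eq_right h1, max_eq_right (by norm_num)]
      rw [this, abs_of_nonneg (by linarith)]
      exact le_trans (le_max_left _ _) (le_max_left _ _)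

lemma Pd_le_abs_add_one (x : ℝ) : Pd x ≤ |x| + 1 := by
  have h1 := le_abs_self x
  have h2 := neg_abs_le x
  unfold Pd
  refine max_le (max_le (by linarith) (by linarith)) (by positivity)

lemma Pd_zero_of_mem {x : ℝ} (h : x ∈ Set.Icc (0:ℝ) 1) : Pd x = 0 := by
  have h1 := h.1; have h2 := h.2
  unfold Pd
  rw [max_eq_right (max_le (by linarith) (by linarith))]

lemma mem_of_Pd_eq_zero {x : ℝ} (h : Pd x = 0) : x ∈ Set.Icc (0:ℝ) 1 := by
  have h1 : x - 1 ≤ Pd x := le_trans (le_max_left _ _) (le_max_left _ _)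
  have h2 : -x ≤ Pd x := le_trans (le_max_right _ _) (le_max_left _ _)
  rw [h] at h1 h2
  exact ⟨by linarith, by linarith⟩

/-- the shifted right-hand side of the lattice equation -/
noncomputable def lattF (D τ β : ℝ) (g : ℝ → ℝ → ℝ) (u : ℤ → ℝ → ℝ) (n : ℤ) (s : ℝ) : ℝ :=
  (β - 2*D) * u n s + D * (u (n+1) s + u (n-1) s) + u n s * g (u n s) (u n (s - τ))

set_option maxHeartbeats 1000000 in
/-- The mild solution of the delayed lattice equation with initial data in `[0,1]`
stays in `[0,1]` for all positive times. -/
theorem stmt6 (D τ d : ℝ) (hD : 0 < D) (hτ : 0 ≤ τ) (hd : 0 < d)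
    (g : ℝ → ℝ → ℝ) (hH1 : HypH1 g) (hH2 : HypH2 g)
    (hdmono : MonotoneOn (fun u => d * u + u * g u 1) (Set.Icc 0 1))
    (φ u : ℤ → ℝ → ℝ)
    (hφrange : ∀ (n : ℤ) (s : ℝ), s ∈ Set.Icc (-τ) 0 → φ n s ∈ Set.Icc (0:ℝ) 1)
    (hφcont : ∀ n : ℤ, ContinuousOn (φ n) (Set.Icc (-τ) 0))
    (hu : MildSolution D τ d g φ u) :
    ∀ (n : ℤ) (t : ℝ), 0 < t → u n t ∈ Set.Icc (0:ℝ) 1 := by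
  obtain ⟨hg10, hgpos⟩ := hH1
  obtain ⟨⟨L, hL⟩, hanti1, hanti2, -⟩ := hH2
  obtain ⟨⟨C, hC⟩, hcont, hinit, hmild⟩ := hu
  have hτ0 : -τ ≤ 0 := neg_nonpos.mpr hτ
  have hu00 : ∀ n : ℤ, u n 0 = φ n 0 := fun n => hinit n 0 ⟨hτ0, le_refl 0⟩
  have hL0 : (0:ℝ) ≤ L := L.2
  have hC0 : (0:ℝ) ≤ C := le_trans (abs_nonneg _) (hC 0 0 hτ0)
  have hLip : ∀ a b a' b' : ℝ, |g a b - g a' b'| ≤ L * max |a - a'| |b - b'| := by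
    intro a b a' b'
    have h := hL.dist_le_mul (a, b) (a', b')
    simpa [Prod.dist_eq, Real.dist_eq] using h
  set R : ℝ := C + 1 with hR
  have hCR : C ≤ R := by rw [hR]; linarith
  have h1R : (1:ℝ) ≤ R := by rw [hR]; linarith
  have hubd : ∀ (n : ℤ) (t : ℝ), -τ ≤ t → |u n t| ≤ R := fun n t h => (hC n t h).trans hCR
  set Gb : ℝ := |g 0 0| + L * R with hGbdef
  have hGb0 : 0 ≤ Gb := by positivity
  have hGbd : ∀ x y : ℝ, |x| ≤ R → |y| ≤ R → |g x y| ≤ Gb := by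
    intro x y hx hy
    have h := hLip x y 0 0
    simp only [sub_zero] at h
    have hm : max |x| |y| ≤ R := max_le hx hy
    have h2 : (L:ℝ) * max |x| |y| ≤ L * R := mul_le_mul_of_nonneg_left hm hL0
    calc |g x y| = |(g x y - g 0 0) + g 0 0| := by ring_nf
      _ ≤ |g x y - g 0 0| + |g 0 0| := abs_add_le _ _
      _ ≤ L * R + |g 0 0| := by linarith
      _ = Gb := by rw [hGbdef]; ring
  set β : ℝ := 2*D + L + 1 with hβdef
  have hβL : β - 2*D = L + 1 := by rw [hβdef]; ring
  have hβ0 : 0 < β := by rw [hβdef]; positivity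
  set Kc : ℝ := 2*L + Gb + D + 1 with hKcdef
  have hKc1 : (1:ℝ) ≤ Kc := by rw [hKcdef]; linarith
  have hKc0 : (0:ℝ) ≤ Kc := by linarith
  -- continuity facts
  have hIci : Set.Ici (0:ℝ) ⊆ Set.Ici (-τ) := fun s hs => le_trans hτ0 hs
  have hucont : ∀ n, ContinuousOn (u n) (Set.Ici (0:ℝ)) := fun n => (hcont n).mono hIci
  have hcont' : ∀ n, ContinuousOn (fun s => u n (s - τ)) (Set.Ici (0:ℝ)) := by
    intro n
    apply (hcont n).comp ((continuous_sub_right τ).continuousOn)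
    intro s hs
    simp only [Set.mem_Ici] at hs ⊢
    linarith
  have hgc : Continuous fun p : ℝ × ℝ => g p.1 p.2 := hL.continuous
  have hFcont : ∀ n, ContinuousOn (lattF D τ β g u n) (Set.Ici (0:ℝ)) := by
    intro n
    unfold lattF
    exact ((continuousOn_const.mul (hucont n)).add
      (continuousOn_const.mul ((hucont (n+1)).add (hucont (n-1))))).add
      ((hucont n).mul (hgc.comp_continuousOn ((hucont n).prodMk (hcont' n))))
  -- Step A : variation of constants with the constant β
  have key : ∀ (n : ℤ) (t : ℝ), 0 < t →
      Real.exp (β*t) * u n t = φ n 0 + ∫ s in (0:ℝ)..t, Real.exp (β*s) * lattF D τ β g u n s := by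
    intro n t ht
    set G : ℝ → ℝ := fun s =>
      d * u n s + D * (u (n+1) s + u (n-1) s) + u n s * g (u n s) (u n (s - τ)) with hGdef
    have hGc : ContinuousOn G (Set.Ici (0:ℝ)) := by
      rw [hGdef]
      exact ((continuousOn_const.mul (hucont n)).add
        (continuousOn_const.mul ((hucont (n+1)).add (hucont (n-1))))).add
        ((hucont n).mul (hgc.comp_continuousOn ((hucont n).prodMk (hcont' n))))
    have hFG : ∀ s : ℝ, lattF D τ β g u n s = G s + (β - (2*D+d)) * u n s := by
      intro s; rw [hGdef]; unfold lattF; dsimp only; ring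
    have hexpc : ∀ c : ℝ, Continuous fun s : ℝ => Real.exp (c*s) :=
      fun c => Real.continuous_exp.comp (continuous_const.mul continuous_id)
    have hIG : ∀ x : ℝ, 0 ≤ x → IntervalIntegrable (fun r => Real.exp ((2*D+d)*r) * G r) volume 0 x := by
      intro x hx
      apply ContinuousOn.intervalIntegrable
      apply ((hexpc (2*D+d)).continuousOn).mul (hGc.mono ?_)
      rw [Set.uIcc_of_le hx]
      exact fun s hs => hs.1
    set v : ℝ → ℝ := fun s => φ n 0 + ∫ r in (0:ℝ)..s, Real.exp ((2*D+d)*r) * G r with hvdef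
    have hveq : ∀ s : ℝ, 0 ≤ s → Real.exp ((2*D+d)*s) * u n s = v s := by
      intro s hs
      rcases eq_or_lt_of_le hs with h | hs'
      · rw [hvdef]; simp [← h, hu00 n]
      · rw [hmild n s hs', hvdef]
        dsimp only
        rw [mul_add]
        congr 1
        · rw [← mul_assoc, ← Real.exp_add]
          have : (2*D+d)*s + -(2*D+d)*s = 0 := by ring
          rw [this, Real.exp_zero, one_mul]
        · rw [← intervalIntegral.integral_const_mul]
          apply intervalIntegral.integral_congr
          intro r _
          dsimp only
          rw [hGdef, ← mul_assoc, ← Real.exp_add]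
          congr 2
          ring
    have hderiv : ∀ x ∈ Set.Ioo (0:ℝ) t,
        HasDerivAt (fun s => Real.exp (β*s) * u n s) (Real.exp (β*x) * lattF D τ β g u n x) x := by
      intro x hx
      have hx0 : 0 < x := hx.1
      have hGcIoi : ContinuousOn (fun r => Real.exp ((2*D+d)*r) * G r) (Set.Ioi (0:ℝ)) :=
        (((hexpc (2*D+d)).continuousOn).mul hGc).mono Set.Ioi_subset_Ici_self
      have hvd : HasDerivAt v (Real.exp ((2*D+d)*x) * G x) x := by
        rw [hvdef]
        apply HasDerivAt.const_add
        exact intervalIntegral.integral_hasDerivAt_right (hIG x hx0.le)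
          (hGcIoi.stronglyMeasurableAtFilter isOpen_Ioi x hx0)
          (hGcIoi.continuousAt (Ioi_mem_nhds hx0))
      have he : HasDerivAt (fun s => Real.exp ((β-(2*D+d))*s))
          (Real.exp ((β-(2*D+d))*x) * (β-(2*D+d))) x := by
        simpa using ((hasDerivAt_id x).const_mul (β-(2*D+d))).exp
      have hev := he.mul hvd
      have heq : (fun s => Real.exp (β*s) * u n s)
          =ᶠ[nhds x] (fun s => Real.exp ((β-(2*D+d))*s) * v s) := by
        filter_upwards [Ioi_mem_nhds hx0] with s hs
        rw [← hveq s (le_of_lt hs), ← mul_assoc, ← Real.exp_add]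
        congr 2
        ring
      have hfin := hev.congr_of_eventuallyEq heq
      refine hfin.congr_deriv ?_
      rw [← hveq x hx0.le, hFG x]
      have h1 : Real.exp (β*x) = Real.exp ((β-(2*D+d))*x) * Real.exp ((2*D+d)*x) := by
        rw [← Real.exp_add]; congr 1; ring
      rw [h1]; ring
    have hWcont : ContinuousOn (fun s => Real.exp (β*s) * u n s) (Set.Icc 0 t) :=
      (((hexpc β).continuousOn).mul ((hucont n).mono Set.Icc_subset_Ici_self))
    have hFint : IntervalIntegrable (fun s => Real.exp (β*s) * lattF D τ β g u n s) volume 0 t := by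
      apply ContinuousOn.intervalIntegrable
      apply ((hexpc β).continuousOn).mul ((hFcont n).mono ?_)
      rw [Set.uIcc_of_le ht.le]
      exact fun s hs => hs.1
    have hFTC := intervalIntegral.integral_eq_sub_of_hasDeriv_right_of_le ht.le hWcont
      (fun x hx => (hderiv x hx).hasDerivWithinAt) hFint
    rw [hFTC]
    simp [hu00 n]
  -- fhat bounds
  have hfhat : ∀ A B Cc E : ℝ, A ∈ Set.Icc (0:ℝ) 1 → B ∈ Set.Icc (0:ℝ) 1 →
      Cc ∈ Set.Icc (0:ℝ) 1 → E ∈ Set.Icc (0:ℝ) 1 →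
      0 ≤ (β - 2*D) * A + D * (B + Cc) + A * g A E ∧
        (β - 2*D) * A + D * (B + Cc) + A * g A E ≤ β := by
    intro A B Cc E hA hB hCc hE
    have h01 : (0:ℝ) ∈ Set.Icc (0:ℝ) 1 := by norm_num
    have h11 : (1:ℝ) ∈ Set.Icc (0:ℝ) 1 := by norm_num
    have hgE0 : g A E ≤ g A 0 := by
      rcases eq_or_lt_of_le hE.1 with h | h
      · rw [← h]
      · exact le_of_lt ((hanti2 A hA) h01 hE h)
    have hgE1 : g A 1 ≤ g A E := by
      rcases eq_or_lt_of_le hE.2 with h | h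
      · rw [h]
      · exact le_of_lt ((hanti2 A hA) hE h11 h)
    have hgA1 : g 1 1 ≤ g A 1 := by
      rcases eq_or_lt_of_le hA.2 with h | h
      · rw [h]
      · exact le_of_lt ((hanti1 1 h11) hA h11 h)
    have hg11 : -(L:ℝ) ≤ g 1 1 := by
      have h := hLip 1 1 1 0
      rw [hg10] at h
      simp only [sub_self, sub_zero, abs_zero, abs_one] at h
      rw [max_eq_right (by norm_num : (0:ℝ) ≤ 1), mul_one] at h
      have := (abs_le.mp h).1
      linarith
    have hgA0 : g A 0 ≤ L * (1 - A) := by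
      have h := hLip A 0 1 0
      rw [hg10] at h
      simp only [sub_self, sub_zero, abs_zero] at h
      rw [max_eq_left (abs_nonneg _)] at h
      rw [abs_of_nonpos (by linarith [hA.2] : A - 1 ≤ 0)] at h
      have h2 := (abs_le.mp h).2
      have h3 : (L:ℝ) * -(A-1) = L*(1-A) := by ring
      linarith
    have hgE : -(L:ℝ) ≤ g A E := by linarith
    constructor
    · nlinarith [mul_nonneg hD.le (add_nonneg hB.1 hCc.1),
        mul_le_mul_of_nonneg_left hgE hA.1, hA.1, hβL]
    · nlinarith [mul_le_mul_of_nonneg_left hgE0 hA.1,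
        mul_le_mul_of_nonneg_left hgA0 hA.1,
        mul_nonneg (mul_nonneg hL0 (sub_nonneg.mpr hA.2)) (sub_nonneg.mpr hA.2),
        hB.2, hCc.2, hD.le, hβL, hA.1, hA.2, hL0]
  have hKdiff : ∀ a b c e : ℝ, |a| ≤ R → |b| ≤ R → |c| ≤ R → |e| ≤ R →
      |((β-2*D)*a + D*(b+c) + a * g a e)
        - ((β-2*D)*pj a + D*(pj b + pj c) + pj a * g (pj a) (pj e))|
        ≤ Kc * (Pd a + Pd b + Pd c + Pd e) := by
    intro a b c e ha hb hc he
    have hpa := abs_sub_pj_le a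
    have hpb := abs_sub_pj_le b
    have hpc := abs_sub_pj_le c
    have hpe := abs_sub_pj_le e
    have hPa := Pd_nonneg a
    have hPb := Pd_nonneg b
    have hPc := Pd_nonneg c
    have hPe := Pd_nonneg e
    have e1 : |(β-2*D)*(a - pj a)| ≤ (L+1) * Pd a := by
      rw [abs_mul, hβL, abs_of_nonneg (by linarith : (0:ℝ) ≤ (L:ℝ)+1)]
      exact mul_le_mul_of_nonneg_left hpa (by linarith)
    have e2 : |D*((b - pj b)+(c - pj c))| ≤ D * (Pd b + Pd c) := by
      rw [abs_mul, abs_of_nonneg hD.le]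
      apply mul_le_mul_of_nonneg_left _ hD.le
      calc |(b - pj b)+(c - pj c)| ≤ |b - pj b| + |c - pj c| := abs_add_le _ _
        _ ≤ Pd b + Pd c := by linarith
    have e3 : |a * g a e - pj a * g (pj a) (pj e)| ≤ Gb * Pd a + L * (Pd a + Pd e) := by
      have hdec : a * g a e - pj a * g (pj a) (pj e)
          = (a - pj a) * g a e + pj a * (g a e - g (pj a) (pj e)) := by ring
      have hga : |g a e| ≤ Gb := hGbd a e ha he
      have hglip : |g a e - g (pj a) (pj e)| ≤ L * (Pd a + Pd e) := by
        calc |g a e - g (pj a) (pj e)| ≤ L * max |a - pj a| |e - pj e| := hLip a e (pj a) (pj e)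
          _ ≤ L * (Pd a + Pd e) := by
              apply mul_le_mul_of_nonneg_left _ hL0
              apply max_le <;> linarith
      calc |a * g a e - pj a * g (pj a) (pj e)|
          = |(a - pj a) * g a e + pj a * (g a e - g (pj a) (pj e))| := by rw [hdec]
        _ ≤ |(a - pj a) * g a e| + |pj a * (g a e - g (pj a) (pj e))| := abs_add_le _ _
        _ ≤ Pd a * Gb + 1 * (L * (Pd a + Pd e)) := by
            apply add_le_add
            · rw [abs_mul]
              exact mul_le_mul hpa hga (abs_nonneg _) hPa
            · rw [abs_mul]
              exact mul_le_mul (abs_pj_le_one a) hglip (abs_nonneg _) (by norm_num)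
        _ = Gb * Pd a + L * (Pd a + Pd e) := by ring
    have hsplit : ((β-2*D)*a + D*(b+c) + a * g a e)
        - ((β-2*D)*pj a + D*(pj b + pj c) + pj a * g (pj a) (pj e))
        = (β-2*D)*(a - pj a) + D*((b - pj b)+(c - pj c))
          + (a * g a e - pj a * g (pj a) (pj e)) := by ring
    rw [hsplit]
    calc |(β-2*D)*(a - pj a) + D*((b - pj b)+(c - pj c))
          + (a * g a e - pj a * g (pj a) (pj e))|
        ≤ |(β-2*D)*(a - pj a) + D*((b - pj b)+(c - pj c))|
          + |a * g a e - pj a * g (pj a) (pj e)| := abs_add_le _ _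
      _ ≤ (|(β-2*D)*(a - pj a)| + |D*((b - pj b)+(c - pj c))|)
          + |a * g a e - pj a * g (pj a) (pj e)| := by
            have := abs_add_le ((β-2*D)*(a - pj a)) (D*((b - pj b)+(c - pj c)))
            linarith
      _ ≤ ((L+1) * Pd a + D * (Pd b + Pd c)) + (Gb * Pd a + L * (Pd a + Pd e)) := by linarith
      _ ≤ Kc * (Pd a + Pd b + Pd c + Pd e) := by
          have hexp : Kc * (Pd a + Pd b + Pd c + Pd e)
              - (((L+1) * Pd a + D * (Pd b + Pd c)) + (Gb * Pd a + L * (Pd a + Pd e)))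
              = D*Pd a + (2*L+Gb+1)*Pd b + (2*L+Gb+1)*Pd c + ((L:ℝ)+Gb+D+1)*Pd e := by
            rw [hKcdef]; ring
          linarith [hexp, mul_nonneg hD.le hPa,
            mul_nonneg (by linarith : (0:ℝ) ≤ 2*(L:ℝ)+Gb+1) hPb,
            mul_nonneg (by linarith : (0:ℝ) ≤ 2*(L:ℝ)+Gb+1) hPc,
            mul_nonneg (by linarith : (0:ℝ) ≤ (L:ℝ)+Gb+D+1) hPe]
  -- theta: running supremum of the distance to [0,1]
  set S : ℝ → Set ℝ := fun t => (fun p : ℤ × ℝ => Pd (u p.1 p.2)) '' (Set.univ ×ˢ Set.Icc (-τ) t) with hSdef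
  set θ : ℝ → ℝ := fun t => sSup (S t) with hθdef
  have hSne : ∀ t : ℝ, 0 ≤ t → (S t).Nonempty := by
    intro t ht
    exact ⟨Pd (u 0 0), ⟨(0,0), ⟨Set.mem_univ _, hτ0, ht⟩, rfl⟩⟩
  have hSbdd : ∀ t : ℝ, BddAbove (S t) := by
    intro t
    refine ⟨C + 1, ?_⟩
    rintro x ⟨⟨n, σ⟩, ⟨-, hσ⟩, rfl⟩
    have h1 := Pd_le_abs_add_one (u n σ)
    have h2 := hC n σ hσ.1
    dsimp only
    linarith
  have hmemθ : ∀ (n : ℤ) (σ t : ℝ), σ ∈ Set.Icc (-τ) t → Pd (u n σ) ≤ θ t := by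
    intro n σ t hσ
    exact le_csSup (hSbdd t) ⟨(n, σ), ⟨Set.mem_univ _, hσ⟩, rfl⟩
  have hθ0 : ∀ t : ℝ, 0 ≤ t → 0 ≤ θ t :=
    fun t ht => le_trans (Pd_nonneg (u 0 0)) (hmemθ 0 0 t ⟨hτ0, ht⟩)
  have hθmono : ∀ t1 t2 : ℝ, 0 ≤ t1 → t1 ≤ t2 → θ t1 ≤ θ t2 := by
    intro t1 t2 h1 h12
    apply csSup_le_csSup (hSbdd t2) (hSne t1 h1)
    rintro x ⟨p, ⟨hp1, hp2⟩, rfl⟩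
    exact ⟨p, ⟨hp1, hp2.1, hp2.2.trans h12⟩, rfl⟩
  have hθint : ∀ a b : ℝ, 0 ≤ a → a ≤ b → IntervalIntegrable θ volume a b := by
    intro a b ha hab
    apply MonotoneOn.intervalIntegrable
    intro x hx y hy hxy
    rw [Set.uIcc_of_le hab] at hx hy
    exact hθmono x y (ha.trans hx.1) hxy
  have hexpc : ∀ c : ℝ, Continuous fun s : ℝ => Real.exp (c*s) :=
    fun c => Real.continuous_exp.comp (continuous_const.mul continuous_id)
  -- pointwise estimate
  have hest : ∀ (n : ℤ) (t : ℝ), 0 < t →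
      u n t - 1 ≤ 4*Kc * (∫ s in (0:ℝ)..t, θ s) ∧
        -(u n t) ≤ 4*Kc * (∫ s in (0:ℝ)..t, θ s) := by
    intro n t ht
    have hkey := key n t ht
    have hSum4 : ∀ s : ℝ, 0 ≤ s →
        Pd (u n s) + Pd (u (n+1) s) + Pd (u (n-1) s) + Pd (u n (s-τ)) ≤ 4 * θ s := by
      intro s hs
      have h1 := hmemθ n s s ⟨le_trans hτ0 hs, le_refl s⟩
      have h2 := hmemθ (n+1) s s ⟨le_trans hτ0 hs, le_refl s⟩
      have h3 := hmemθ (n-1) s s ⟨le_trans hτ0 hs, le_refl s⟩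
      have h4 := hmemθ n (s-τ) s ⟨by linarith, by linarith⟩
      linarith
    have hpt : ∀ s : ℝ, s ∈ Set.Icc (0:ℝ) t →
        (lattF D τ β g u n s ≤ β + Kc * (4 * θ s) ∧
          -(Kc * (4 * θ s)) ≤ lattF D τ β g u n s) := by
      intro s hs
      have hs0 := hs.1
      have ha : |u n s| ≤ R := hubd n s (le_trans hτ0 hs0)
      have hb : |u (n+1) s| ≤ R := hubd (n+1) s (le_trans hτ0 hs0)
      have hc' : |u (n-1) s| ≤ R := hubd (n-1) s (le_trans hτ0 hs0)
      have he : |u n (s-τ)| ≤ R := hubd n (s-τ) (by linarith)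
      have hdiff := hKdiff (u n s) (u (n+1) s) (u (n-1) s) (u n (s-τ)) ha hb hc' he
      have hfh := hfhat (pj (u n s)) (pj (u (n+1) s)) (pj (u (n-1) s)) (pj (u n (s-τ)))
        (pj_mem _) (pj_mem _) (pj_mem _) (pj_mem _)
      have hKSum4 : Kc * (Pd (u n s) + Pd (u (n+1) s) + Pd (u (n-1) s) + Pd (u n (s-τ)))
          ≤ Kc * (4 * θ s) := mul_le_mul_of_nonneg_left (hSum4 s hs0) hKc0
      have habs := abs_le.mp hdiff
      have hlf : lattF D τ β g u n s = (β-2*D)*u n s + D*(u (n+1) s + u (n-1) s)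
          + u n s * g (u n s) (u n (s-τ)) := rfl
      constructor
      · rw [hlf]; linarith [habs.2, hfh.2]
      · rw [hlf]; linarith [habs.1, hfh.1]
    have hup : ∀ s ∈ Set.Icc (0:ℝ) t,
        Real.exp (β*s) * lattF D τ β g u n s
          ≤ β * Real.exp (β*s) + (Real.exp (β*t) * (4*Kc)) * θ s := by
      intro s hs
      have hps := hpt s hs
      have hexp_pos : (0:ℝ) < Real.exp (β*s) := Real.exp_pos _
      have hle : Real.exp (β*s) ≤ Real.exp (β*t) :=
        Real.exp_le_exp.mpr (mul_le_mul_of_nonneg_left hs.2 hβ0.le)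
      have hθs : 0 ≤ θ s := hθ0 s hs.1
      have h1 : Real.exp (β*s) * lattF D τ β g u n s
          ≤ Real.exp (β*s) * (β + Kc * (4*θ s)) :=
        mul_le_mul_of_nonneg_left hps.1 hexp_pos.le
      have h2 : Real.exp (β*s) * (Kc * (4*θ s)) ≤ Real.exp (β*t) * (Kc * (4*θ s)) :=
        mul_le_mul_of_nonneg_right hle (mul_nonneg hKc0 (by linarith))
      have h3 : Real.exp (β*s) * (β + Kc * (4*θ s))
          = β * Real.exp (β*s) + Real.exp (β*s) * (Kc * (4*θ s)) := by ring
      have h4 : (Real.exp (β*t) * (4*Kc)) * θ s = Real.exp (β*t) * (Kc * (4*θ s)) := by ring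
      linarith
    have hlow : ∀ s ∈ Set.Icc (0:ℝ) t,
        -((Real.exp (β*t) * (4*Kc)) * θ s) ≤ Real.exp (β*s) * lattF D τ β g u n s := by
      intro s hs
      have hps := hpt s hs
      have hexp_pos : (0:ℝ) < Real.exp (β*s) := Real.exp_pos _
      have hle : Real.exp (β*s) ≤ Real.exp (β*t) :=
        Real.exp_le_exp.mpr (mul_le_mul_of_nonneg_left hs.2 hβ0.le)
      have hθs : 0 ≤ θ s := hθ0 s hs.1
      have h1 : Real.exp (β*s) * (-(Kc * (4*θ s))) ≤ Real.exp (β*s) * lattF D τ β g u n s :=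
        mul_le_mul_of_nonneg_left hps.2 hexp_pos.le
      have h2 : Real.exp (β*s) * (Kc * (4*θ s)) ≤ Real.exp (β*t) * (Kc * (4*θ s)) :=
        mul_le_mul_of_nonneg_right hle (mul_nonneg hKc0 (by linarith))
      have h3 : Real.exp (β*s) * (-(Kc * (4*θ s))) = -(Real.exp (β*s) * (Kc * (4*θ s))) := by ring
      have h4 : (Real.exp (β*t) * (4*Kc)) * θ s = Real.exp (β*t) * (Kc * (4*θ s)) := by ring
      linarith
    have hFint : IntervalIntegrable (fun s => Real.exp (β*s) * lattF D τ β g u n s) volume 0 t := by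
      apply ContinuousOn.intervalIntegrable
      apply ((hexpc β).continuousOn).mul ((hFcont n).mono ?_)
      rw [Set.uIcc_of_le ht.le]
      exact fun s hs => hs.1
    have hθi : IntervalIntegrable θ volume 0 t := hθint 0 t le_rfl ht.le
    have hbexp : Continuous (fun s : ℝ => β * Real.exp (β*s)) := continuous_const.mul (hexpc β)
    have hupint : IntervalIntegrable
        (fun s => β * Real.exp (β*s) + (Real.exp (β*t) * (4*Kc)) * θ s) volume 0 t :=
      (hbexp.intervalIntegrable 0 t).add (hθi.const_mul _)
    have hlowint : IntervalIntegrable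
        (fun s => -((Real.exp (β*t) * (4*Kc)) * θ s)) volume 0 t := (hθi.const_mul _).neg
    have hIub := intervalIntegral.integral_mono_on ht.le hFint hupint hup
    have hIlb := intervalIntegral.integral_mono_on ht.le hlowint hFint hlow
    have hexpint : (∫ s in (0:ℝ)..t, β * Real.exp (β*s)) = Real.exp (β*t) - 1 := by
      have hder : ∀ x ∈ Set.uIcc (0:ℝ) t, HasDerivAt (fun s => Real.exp (β*s)) (β * Real.exp (β*x)) x := by
        intro x _
        have h := ((hasDerivAt_id x).const_mul β).exp
        simpa [mul_comm] using h
      rw [intervalIntegral.integral_eq_sub_of_hasDerivAt hder (hbexp.intervalIntegrable 0 t)]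
      simp
    have hsum : (∫ s in (0:ℝ)..t, (β * Real.exp (β*s) + (Real.exp (β*t) * (4*Kc)) * θ s))
        = (Real.exp (β*t) - 1) + (Real.exp (β*t) * (4*Kc)) * ∫ s in (0:ℝ)..t, θ s := by
      rw [intervalIntegral.integral_add (hbexp.intervalIntegrable 0 t) (hθi.const_mul _),
        hexpint, intervalIntegral.integral_const_mul]
    have hneg : (∫ s in (0:ℝ)..t, -((Real.exp (β*t) * (4*Kc)) * θ s))
        = -((Real.exp (β*t) * (4*Kc)) * ∫ s in (0:ℝ)..t, θ s) := by
      rw [intervalIntegral.integral_neg, intervalIntegral.integral_const_mul]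
    set I := ∫ s in (0:ℝ)..t, θ s with hIdef
    have hI0 : 0 ≤ I := intervalIntegral.integral_nonneg ht.le (fun s hs => hθ0 s hs.1)
    have hφ0 := hφrange n 0 ⟨hτ0, le_refl 0⟩
    rw [hsum] at hIub
    rw [hneg] at hIlb
    have hepos : (0:ℝ) < Real.exp (β*t) := Real.exp_pos _
    constructor
    · have hx : Real.exp (β*t) * (1 + 4*Kc*I) = Real.exp (β*t) + (Real.exp (β*t) * (4*Kc)) * I := by
        ring
      have h5 : Real.exp (β*t) * u n t ≤ Real.exp (β*t) * (1 + 4*Kc*I) := by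
        rw [hkey]
        linarith [hIub, hφ0.2, hx]
      have h6 := le_of_mul_le_mul_left h5 hepos
      linarith
    · have hx : Real.exp (β*t) * (-(4*Kc*I)) = -((Real.exp (β*t) * (4*Kc)) * I) := by ring
      have h5 : Real.exp (β*t) * (-(4*Kc*I)) ≤ Real.exp (β*t) * u n t := by
        rw [hkey]
        linarith [hIlb, hφ0.1, hx]
      have h6 := le_of_mul_le_mul_left h5 hepos
      linarith
  -- Gronwall inequality for θ
  have hGron : ∀ t : ℝ, 0 < t → θ t ≤ 4*Kc * ∫ s in (0:ℝ)..t, θ s := by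
    intro t ht
    have hI0 : 0 ≤ 4*Kc * ∫ s in (0:ℝ)..t, θ s :=
      mul_nonneg (by linarith) (intervalIntegral.integral_nonneg ht.le (fun s hs => hθ0 s hs.1))
    apply csSup_le (hSne t ht.le)
    rintro x ⟨⟨m, σ⟩, ⟨-, hσl, hσr⟩, rfl⟩
    dsimp only
    rcases le_or_gt σ 0 with h0 | h0
    · rw [hinit m σ ⟨hσl, h0⟩, Pd_zero_of_mem (hφrange m σ ⟨hσl, h0⟩)]
      exact hI0
    · obtain ⟨e1, e2⟩ := hest m σ h0
      have hIle : (∫ s in (0:ℝ)..σ, θ s) ≤ ∫ s in (0:ℝ)..t, θ s := by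
        rw [← intervalIntegral.integral_add_adjacent_intervals
          (hθint 0 σ le_rfl h0.le) (hθint σ t h0.le hσr)]
        have h2 : 0 ≤ ∫ s in σ..t, θ s :=
          intervalIntegral.integral_nonneg hσr (fun s hs => hθ0 s (h0.le.trans hs.1))
        linarith
      have hmul : 4*Kc * (∫ s in (0:ℝ)..σ, θ s) ≤ 4*Kc * ∫ s in (0:ℝ)..t, θ s :=
        mul_le_mul_of_nonneg_left hIle (by linarith)
      exact Pd_le_of (by linarith) (by linarith) hI0
  have hθzero0 : θ 0 = 0 := by
    apply le_antisymm _ (hθ0 0 le_rfl)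
    apply csSup_le (hSne 0 le_rfl)
    rintro x ⟨⟨m, σ⟩, ⟨-, hσ⟩, rfl⟩
    dsimp only
    rw [hinit m σ hσ, Pd_zero_of_mem (hφrange m σ hσ)]
  set δ : ℝ := 1/(8*Kc) with hδdef
  have hδ0 : 0 < δ := by
    rw [hδdef]
    apply div_pos one_pos
    linarith
  have hzero : ∀ m : ℕ, θ ((m:ℝ) * δ) = 0 := by
    intro m
    induction m with
    | zero => simpa using hθzero0
    | succ m ih =>
      push_cast
      have hmc : (0:ℝ) ≤ (m:ℝ) := Nat.cast_nonneg m
      have hm0 : (0:ℝ) ≤ (m:ℝ) * δ := mul_nonneg hmc hδ0.le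
      have h0m1 : (0:ℝ) < ((m:ℝ)+1) * δ := mul_pos (by linarith) hδ0
      have hmle : (m:ℝ)*δ ≤ ((m:ℝ)+1)*δ :=
        mul_le_mul_of_nonneg_right (by linarith) hδ0.le
      have hg := hGron (((m:ℝ)+1)*δ) h0m1
      have hz1 : (∫ s in (0:ℝ)..((m:ℝ)*δ), θ s) = 0 := by
        have heq : Set.EqOn θ (fun _ => 0) (Set.uIcc 0 ((m:ℝ)*δ)) := by
          intro s hs
          rw [Set.uIcc_of_le hm0] at hs
          have h1 : θ s ≤ θ ((m:ℝ)*δ) := hθmono s _ hs.1 hs.2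
          have h2 : 0 ≤ θ s := hθ0 s hs.1
          rw [ih] at h1
          simp only
          linarith
        rw [intervalIntegral.integral_congr heq]
        simp
      have hz2 : (∫ s in ((m:ℝ)*δ)..(((m:ℝ)+1)*δ), θ s) ≤ θ (((m:ℝ)+1)*δ) * δ := by
        have hmono := intervalIntegral.integral_mono_on hmle
          (hθint _ _ hm0 hmle) (intervalIntegrable_const)
          (fun s hs => hθmono s (((m:ℝ)+1)*δ) (hm0.trans hs.1) hs.2)
        rw [intervalIntegral.integral_const, smul_eq_mul] at hmono
        have hd : (((m:ℝ)+1)*δ - (m:ℝ)*δ) = δ := by ring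
        rw [hd] at hmono
        linarith
      have hsplit := intervalIntegral.integral_add_adjacent_intervals
        (hθint 0 ((m:ℝ)*δ) le_rfl hm0) (hθint ((m:ℝ)*δ) (((m:ℝ)+1)*δ) hm0 hmle)
      have hθnn := hθ0 (((m:ℝ)+1)*δ) h0m1.le
      have hImid : (∫ s in (0:ℝ)..(((m:ℝ)+1)*δ), θ s) ≤ θ (((m:ℝ)+1)*δ) * δ := by
        rw [← hsplit, hz1]
        linarith
      have hKc4 : (0:ℝ) ≤ 4*Kc := by linarith
      have h5 : 4*Kc * (∫ s in (0:ℝ)..(((m:ℝ)+1)*δ), θ s) ≤ 4*Kc * (θ (((m:ℝ)+1)*δ) * δ) :=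
        mul_le_mul_of_nonneg_left hImid hKc4
      have h4 : 4*Kc * δ = 1/2 := by
        rw [hδdef, mul_one_div, div_eq_iff (by linarith : (8:ℝ)*Kc ≠ 0)]
        ring
      have h7 : 4*Kc * (θ (((m:ℝ)+1)*δ) * δ) = (4*Kc*δ) * θ (((m:ℝ)+1)*δ) := by ring
      rw [h7, h4] at h5
      have h8 := hg.trans h5
      exact le_antisymm (by linarith) hθnn
  intro n t ht
  obtain ⟨m, hm⟩ := exists_nat_ge (t/δ)
  have htm : t ≤ (m:ℝ)*δ := by
    rw [div_le_iff₀ hδ0] at hm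
    linarith
  have hθt : θ t = 0 :=
    le_antisymm (le_of_le_of_eq (hθmono t ((m:ℝ)*δ) ht.le htm) (hzero m)) (hθ0 t ht.le)
  have hPd : Pd (u n t) = 0 :=
    le_antisymm (le_of_le_of_eq (hmemθ n t t ⟨le_trans hτ0 ht.le, le_refl t⟩) hθt) (Pd_nonneg _)
  exact mem_of_Pd_eq_zero hPd
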